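/- Let m be a positive integer and n = 3m. Then there is a homotopy equivalence I(H_{n,1}) ≃ S^{2m−1}. -/

import Mathlib

/-! ## Simplicial complexes, realizations, and homotopy-theoretic notions -/

/-- The independence complex of a simple graph, as an abstract simplicial complex:
the collection of finite independent sets of vertices. -/
def indepCx {V : Type} (G : SimpleGraph V) : Set (Finset V) :=
  {s | ∀ u ∈ s, ∀ v ∈ s, ¬ G.Adj u v}

/-- The matching complex of a simple graph: the collection of finite sets of edges,
no two of which share an endpoint. -/
def matchCx {V : Type} (G : SimpleGraph V) : Set (Finset (Sym2 V)) :=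
  {s | (↑s : Set (Sym2 V)) ⊆ G.edgeSet ∧
    ∀ e ∈ s, ∀ e' ∈ s, e ≠ e' → ∀ x : V, x ∈ e → x ∉ e'}

/-- The geometric realization of an abstract simplicial complex `K` on vertex set `V`:
the space of convex-combination weight functions supported on a simplex of `K`. -/
def geom {V : Type} (K : Set (Finset V)) : Type :=
  {f : V → ℝ // (∃ s ∈ K, ∀ v, f v ≠ 0 → v ∈ s) ∧ (∀ v, 0 ≤ f v) ∧ ∑ᶠ v, f v = 1}

noncomputable instance geom.topInst {V : Type} (K : Set (Finset V)) :
    TopologicalSpace (geom K) :=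
  instTopologicalSpaceSubtype

/-- A continuous map is a homotopy equivalence. -/
def IsHtpyEquiv {X Y : Type} [TopologicalSpace X] [TopologicalSpace Y] (f : C(X, Y)) : Prop :=
  ∃ g : C(Y, X), (g.comp f).Homotopic (ContinuousMap.id X) ∧
    (f.comp g).Homotopic (ContinuousMap.id Y)

/-- Any singleton vertex set is independent. -/
lemma singleton_mem_indepCx {V : Type} (G : SimpleGraph V) (v : V) :
    ({v} : Finset V) ∈ indepCx G := by
  intro u hu w hw
  simp only [Finset.mem_singleton] at hu hw
  subst hu; subst hw
  exact G.irrefl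

/-- The point of a geometric realization corresponding to a vertex. -/
noncomputable def geomPt {V : Type} [DecidableEq V] {K : Set (Finset V)} (v : V)
    (h : ({v} : Finset V) ∈ K) : geom K := by
  refine ⟨fun w => if w = v then 1 else 0, ⟨{v}, h, fun w hw => ?_⟩, fun w => ?_, ?_⟩
  · by_cases hwv : w = v
    · simp [hwv]
    · simp [hwv] at hw
  · by_cases hwv : w = v <;> simp [hwv]
  · rw [finsum_eq_single _ v (fun x hx => if_neg hx)]
    simp

/-- The `k`-dimensional sphere. -/
def Sph (k : ℕ) : Type := Metric.sphere (0 : EuclideanSpace ℝ (Fin (k+1))) 1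

noncomputable instance Sph.topInst (k : ℕ) : TopologicalSpace (Sph k) := by
  unfold Sph; infer_instance

/-- A pointed topological space. -/
structure Ptd where
  carrier : Type
  [topInst : TopologicalSpace carrier]
  pt : carrier

attribute [instance] Ptd.topInst

/-- The one-point pointed space. -/
def Ptd.point : Ptd := { carrier := PUnit, pt := PUnit.unit }

/-- The `k`-sphere as a pointed space. -/
noncomputable def Ptd.sphere (k : ℕ) : Ptd where
  carrier := Sph k
  pt := ⟨EuclideanSpace.single 0 1, by
    simp [mem_sphere_iff_norm, EuclideanSpace.norm_single]⟩

/-- The wedge sum of two pointed spaces. -/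
def Ptd.wedge (X Y : Ptd) : Ptd where
  carrier := Quot (fun p q : X.carrier ⊕ Y.carrier => p = q ∨
    (p = Sum.inl X.pt ∧ q = Sum.inr Y.pt) ∨ (p = Sum.inr Y.pt ∧ q = Sum.inl X.pt))
  pt := Quot.mk _ (Sum.inl X.pt)

/-- The reduced suspension of a pointed space: in `X × [0,1]`, collapse
`X × {0} ∪ X × {1} ∪ {pt} × [0,1]` to a point. -/
def Ptd.susp (X : Ptd) : Ptd where
  carrier := Quot (fun p q : X.carrier × unitInterval => p = q ∨
    ((p.2 = 0 ∨ p.2 = 1 ∨ p.1 = X.pt) ∧ (q.2 = 0 ∨ q.2 = 1 ∨ q.1 = X.pt)))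
  pt := Quot.mk _ (X.pt, 0)

/-- Iterated reduced suspension `Σ^k`. -/
def Ptd.suspIter (k : ℕ) (X : Ptd) : Ptd := Ptd.susp^[k] X

/-- The wedge of `k` copies of a pointed space (the empty wedge being a point). -/
def Ptd.wedgeIter : ℕ → Ptd → Ptd
  | 0, _ => Ptd.point
  | k+1, X => (Ptd.wedgeIter k X).wedge X

/-- A finite wedge of spheres of prescribed dimensions (the empty wedge being a point). -/
noncomputable def wedgeOfSpheres : List ℕ → Ptd
  | [] => Ptd.point
  | d :: ds => (Ptd.sphere d).wedge (wedgeOfSpheres ds)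

/-- A space is `k`-connected (`k : ℤ`): it is nonempty whenever `k ≥ -1`, and every
continuous map from a sphere of dimension `≤ k` into it is null-homotopic. -/
def IsConn (X : Type) [TopologicalSpace X] (k : ℤ) : Prop :=
  (-1 ≤ k → Nonempty X) ∧
    ∀ i : ℕ, (i : ℤ) ≤ k → ∀ f : C(Sph i, X), ∃ x : X,
      f.Homotopic (ContinuousMap.const _ x)

/-! ## Inclusions of independence complexes of induced subgraphs -/

/-- Extension by zero of a function defined on a subset of `V`. -/
noncomputable def extendZero {V : Type} {S : Set V} (f : ↥S → ℝ) : V → ℝ :=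
  Function.extend Subtype.val f 0

lemma extendZero_mem {V : Type} {S : Set V} (f : ↥S → ℝ) (x : ↥S) :
    extendZero f ↑x = f x :=
  Subtype.val_injective.extend_apply f 0 x

lemma extendZero_not_mem {V : Type} {S : Set V} (f : ↥S → ℝ) {v : V} (h : v ∉ S) :
    extendZero f v = 0 :=
  Function.extend_apply' f (0 : V → ℝ) v (fun ⟨x, hx⟩ => h (hx ▸ x.2))

lemma finsum_extendZero {V : Type} {S : Set V} (f : ↥S → ℝ) :
    ∑ᶠ v, extendZero f v = ∑ᶠ x : ↥S, f x := by
  rw [show (fun x : ↥S => f x) = fun x : ↥S => extendZero f ↑x from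
      funext fun x => (extendZero_mem f x).symm,
    finsum_set_coe_eq_finsum_mem, ← finsum_mem_univ (f := extendZero f),
    finsum_mem_inter_support_eq' _ Set.univ S]
  intro x hx
  simp only [Set.mem_univ, true_iff]
  exact by_contra fun h => hx (extendZero_not_mem f h)

/-- An independent set of an induced subgraph is independent in the ambient graph. -/
lemma indep_image {V : Type} [DecidableEq V] (G : SimpleGraph V) (S : Set V)
    {s : Finset ↥S} (hs : s ∈ indepCx (G.induce S)) :
    s.image Subtype.val ∈ indepCx G := by
  intro u hu v hv
  simp only [Finset.mem_image] at hu hv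
  obtain ⟨u', hu', rfl⟩ := hu
  obtain ⟨v', hv', rfl⟩ := hv
  exact hs u' hu' v' hv'

/-- The inclusion of the realization of the independence complex of an induced
subgraph into that of the ambient graph (extension of weight functions by zero). -/
noncomputable def inclMap {V : Type} [DecidableEq V] (G : SimpleGraph V) (S : Set V) :
    C(geom (indepCx (G.induce S)), geom (indepCx G)) where
  toFun f := ⟨extendZero f.1, by
      obtain ⟨s, hsK, hsupp⟩ := f.2.1
      refine ⟨s.image Subtype.val, indep_image G S hsK, fun v hv => ?_⟩
      by_cases h : v ∈ S
      · rw [show v = ↑(⟨v, h⟩ : ↥S) from rfl, extendZero_mem] at hv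
        exact Finset.mem_image.2 ⟨⟨v, h⟩, hsupp _ hv, rfl⟩
      · exact absurd (extendZero_not_mem f.1 h) hv,
    fun v => by
      by_cases h : v ∈ S
      · rw [show v = ↑(⟨v, h⟩ : ↥S) from rfl, extendZero_mem]; exact f.2.2.1 _
      · rw [extendZero_not_mem f.1 h],
    by rw [finsum_extendZero]; exact f.2.2.2⟩
  continuous_toFun := by
    apply Continuous.subtype_mk
    apply continuous_pi
    intro v
    by_cases h : v ∈ S
    · have : (fun f : geom (indepCx (G.induce S)) => extendZero f.1 v) =
        fun f : geom (indepCx (G.induce S)) => f.1 ⟨v, h⟩ :=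
        funext fun f => extendZero_mem f.1 ⟨v, h⟩
      rw [this]
      exact (continuous_apply _).comp continuous_subtype_val
    · have : (fun f : geom (indepCx (G.induce S)) => extendZero f.1 v) =
        fun _ => (0 : ℝ) := funext fun f => extendZero_not_mem f.1 h
      rw [this]
      exact continuous_const

/-! ## The graphs `G_{n,t}` and `H_{n,t}` (line graphs of polygonal line tilings) -/

/-- Ambient vertex names for the graphs `G_{n,t}`: `a i`, `b i j`, `c i j`. -/
inductive GV : Type
  | a : ℕ → GV
  | b : ℕ → ℕ → GV
  | c : ℕ → ℕ → GV
deriving DecidableEq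

/-- The base adjacency rules of `G_{n,t}` on the ambient vertex names (the parameter
`t` is handled by restricting to the appropriate vertex set). -/
def gRel (n : ℕ) : GV → GV → Prop
  | .a i, .b i' j => i' = i + 1 ∧ (j = 1 ∨ j = n - 1)
  | .a i, .c i' j => i' = i ∧ (j = 1 ∨ j = n - 1)
  | .b i j, .b i' j' => (i' = i ∧ j' = j + 1) ∨ (i' = i + 1 ∧ j = n - 1 ∧ j' = 1)
  | .c i j, .c i' j' => (i' = i ∧ j' = j + 1) ∨ (i' = i + 1 ∧ j = n - 1 ∧ j' = 1)
  | _, _ => False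

/-- The graph on all ambient vertex names with the adjacency rules of the `G_{n,t}`. -/
def gFull (n : ℕ) : SimpleGraph GV := SimpleGraph.fromRel (gRel n)

/-- The vertex set of `G_{n,t}`:
`{a_0, …, a_t} ∪ {b_{i,j}, c_{i,j} : 1 ≤ i ≤ t, 1 ≤ j ≤ n-1}`. -/
def GVset (n t : ℕ) : Set GV :=
  {v | match v with
    | .a i => i ≤ t
    | .b i j => 1 ≤ i ∧ i ≤ t ∧ 1 ≤ j ∧ j ≤ n - 1
    | .c i j => 1 ≤ i ∧ i ≤ t ∧ 1 ≤ j ∧ j ≤ n - 1}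

/-- The graph `G_{n,t}`, the line graph of the polygonal line tiling of `t` `2n`-gons. -/
def lineG (n t : ℕ) : SimpleGraph (GVset n t) := (gFull n).induce (GVset n t)

/-- The vertex set of `H_{n,t}`: that of `G_{n,t}` plus `b_{t+1,1}` and `c_{t+1,1}`. -/
def HVset (n t : ℕ) : Set GV := GVset n t ∪ {GV.b (t+1) 1, GV.c (t+1) 1}

/-- The graph `H_{n,t}`, the induced subgraph of `G_{n,t+1}` on
`V(G_{n,t}) ∪ {b_{t+1,1}, c_{t+1,1}}`. -/
def lineH (n t : ℕ) : SimpleGraph (HVset n t) := (gFull n).induce (HVset n t)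

lemma a0_mem_GVset (n t : ℕ) : GV.a 0 ∈ GVset n t := by simp [GVset]

lemma a0_mem_HVset (n t : ℕ) : GV.a 0 ∈ HVset n t := Or.inl (a0_mem_GVset n t)

/-- The realization of `I(G_{n,t})`, pointed at the vertex `a_0`. -/
noncomputable def IG (n t : ℕ) : Ptd where
  carrier := geom (indepCx (lineG n t))
  pt := geomPt ⟨GV.a 0, a0_mem_GVset n t⟩ (singleton_mem_indepCx _ _)

/-- The realization of `I(H_{n,t})`, pointed at the vertex `a_0`. -/
noncomputable def IH (n t : ℕ) : Ptd where
  carrier := geom (indepCx (lineH n t))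
  pt := geomPt ⟨GV.a 0, a0_mem_HVset n t⟩ (singleton_mem_indepCx _ _)

/-- The vertex set of `X_t = G_{n,t} ∖ a_{t-1}`. -/
def XVset (n t : ℕ) : Set GV := GVset n t \ {GV.a (t-1)}

/-- The graph `X_t = G_{n,t} ∖ a_{t-1}`. -/
def lineX (n t : ℕ) : SimpleGraph (XVset n t) := (gFull n).induce (XVset n t)

/-- The vertex set of `Y_t = X_t ∖ a_{t-2}`. -/
def YVset (n t : ℕ) : Set GV := XVset n t \ {GV.a (t-2)}

/-- The graph `Y_t = X_t ∖ a_{t-2}`. -/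
def lineY (n t : ℕ) : SimpleGraph (YVset n t) := (gFull n).induce (YVset n t)

lemma a0_mem_XVset {n t : ℕ} (ht : 2 ≤ t) : GV.a 0 ∈ XVset n t := by
  refine ⟨a0_mem_GVset n t, fun h => ?_⟩
  rw [Set.mem_singleton_iff] at h
  injection h with h'
  omega

lemma a0_mem_YVset {n t : ℕ} (ht : 3 ≤ t) : GV.a 0 ∈ YVset n t := by
  refine ⟨a0_mem_XVset (by omega), fun h => ?_⟩
  rw [Set.mem_singleton_iff] at h
  injection h with h'
  omega

/-- The realization of `I(X_t)`, pointed at the vertex `a_0` (for `t ≥ 2`). -/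
noncomputable def IX (n t : ℕ) (ht : 2 ≤ t) : Ptd where
  carrier := geom (indepCx (lineX n t))
  pt := geomPt ⟨GV.a 0, a0_mem_XVset ht⟩ (singleton_mem_indepCx _ _)

/-- The realization of `I(Y_t)`, pointed at the vertex `a_0` (for `t ≥ 3`). -/
noncomputable def IY (n t : ℕ) (ht : 3 ≤ t) : Ptd where
  carrier := geom (indepCx (lineY n t))
  pt := geomPt ⟨GV.a 0, a0_mem_YVset ht⟩ (singleton_mem_indepCx _ _)

/-! ## The polygonal line tilings `P_{n,t}` themselves -/

/-- Ambient vertex names for the tiling `P_{n,t}`: `u i`/`v i` are the endpoints of the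
`i`-th shared (vertical) edge, and `p i j` / `q i j` are the intermediate vertices of
the top/bottom boundary path of the `i`-th polygon. -/
inductive PV : Type
  | u : ℕ → PV
  | v : ℕ → PV
  | p : ℕ → ℕ → PV
  | q : ℕ → ℕ → PV
deriving DecidableEq

/-- The base adjacency rules of the tiling `P_{n,t}` on the ambient vertex names. -/
def pRel (n : ℕ) : PV → PV → Prop
  | .u i, .v i' => i' = i
  | .u i, .u i' => i' = i + 1 ∧ n = 2
  | .v i, .v i' => i' = i + 1 ∧ n = 2
  | .u i, .p i' j => (i' = i + 1 ∧ j = 1) ∨ (i' = i ∧ j = n - 2)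
  | .v i, .q i' j => (i' = i + 1 ∧ j = 1) ∨ (i' = i ∧ j = n - 2)
  | .p i j, .p i' j' => i' = i ∧ j' = j + 1
  | .q i j, .q i' j' => i' = i ∧ j' = j + 1
  | _, _ => False

/-- The graph on all ambient tiling vertex names. -/
def pFull (n : ℕ) : SimpleGraph PV := SimpleGraph.fromRel (pRel n)

/-- The vertex set of `P_{n,t}`. -/
def PVset (n t : ℕ) : Set PV :=
  {w | match w with
    | .u i => i ≤ t
    | .v i => i ≤ t
    | .p i j => 1 ≤ i ∧ i ≤ t ∧ 1 ≤ j ∧ j ≤ n - 2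
    | .q i j => 1 ≤ i ∧ i ≤ t ∧ 1 ≤ j ∧ j ≤ n - 2}

/-- The polygonal line tiling `P_{n,t}` of `t` `2n`-gons. -/
def polyP (n t : ℕ) : SimpleGraph (PVset n t) := (pFull n).induce (PVset n t)

open scoped Classical

/-! ### General machinery -/

lemma geom_support_finite {V : Type} {K : Set (Finset V)} (f : geom K) :
    (Function.support f.1).Finite := by
  obtain ⟨s, _, hs⟩ := f.2.1
  exact Set.Finite.subset s.finite_toSet (fun v hv => hs v hv)

/-- The complex of independent sets contained in `S`. -/
def cx {V : Type} (G : SimpleGraph V) (S : Set V) : Set (Finset V) :=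
  {s | (↑s : Set V) ⊆ S ∧ ∀ u ∈ s, ∀ v ∈ s, ¬ G.Adj u v}

lemma cx_mono {V : Type} (G : SimpleGraph V) {S T : Set V} (h : S ⊆ T) :
    cx G S ⊆ cx G T := fun s hs => ⟨hs.1.trans h, hs.2⟩

section Bridge

variable {V : Type} [DecidableEq V] (G : SimpleGraph V) (S : Set V)

lemma geom_cx_eq_zero {f : geom (cx G S)} {v : V} (hv : v ∉ S) : f.1 v = 0 := by
  by_contra h
  obtain ⟨s, hs, hsupp⟩ := f.2.1
  exact hv (hs.1 (hsupp v h))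

/-- The homeomorphism between the realization of the independence complex of an
induced subgraph and the realization of `cx G S`. -/
noncomputable def bridgeHomeo : geom (indepCx (G.induce S)) ≃ₜ geom (cx G S) where
  toFun f := ⟨extendZero f.1, by
      obtain ⟨s, hsK, hsupp⟩ := f.2.1
      refine ⟨s.image Subtype.val, ⟨?_, ?_⟩, fun v hv => ?_⟩
      · intro v hv
        simp only [Finset.coe_image, Set.mem_image] at hv
        obtain ⟨u, _, rfl⟩ := hv
        exact u.2
      · intro u hu v hv
        simp only [Finset.mem_image] at hu hv
        obtain ⟨u', hu', rfl⟩ := hu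
        obtain ⟨v', hv', rfl⟩ := hv
        exact hsK u' hu' v' hv'
      · by_cases h : v ∈ S
        · rw [show v = ↑(⟨v, h⟩ : ↥S) from rfl, extendZero_mem] at hv
          exact Finset.mem_image.2 ⟨⟨v, h⟩, hsupp _ hv, rfl⟩
        · exact absurd (extendZero_not_mem f.1 h) hv,
    fun v => by
      by_cases h : v ∈ S
      · rw [show v = ↑(⟨v, h⟩ : ↥S) from rfl, extendZero_mem]; exact f.2.2.1 _
      · rw [extendZero_not_mem f.1 h],
    by rw [finsum_extendZero]; exact f.2.2.2⟩
  invFun f := ⟨fun x => f.1 ↑x, by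
      obtain ⟨s, hs, hsupp⟩ := f.2.1
      refine ⟨s.preimage Subtype.val (Subtype.val_injective.injOn), fun u hu v hv hadj => ?_,
        fun x hx => ?_⟩
      · rw [Finset.mem_preimage] at hu hv
        exact hs.2 _ hu _ hv hadj
      · rw [Finset.mem_preimage]
        exact hsupp _ hx,
    fun x => f.2.2.1 _,
    by
      have hext : extendZero (fun x : ↥S => f.1 ↑x) = f.1 := by
        funext v
        by_cases h : v ∈ S
        · exact extendZero_mem _ ⟨v, h⟩
        · rw [extendZero_not_mem _ h, geom_cx_eq_zero G S h]
      rw [← finsum_extendZero, hext]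
      exact f.2.2.2⟩
  left_inv f := by
    apply Subtype.ext
    funext x
    exact extendZero_mem f.1 x
  right_inv f := by
    apply Subtype.ext
    funext v
    show extendZero (fun x : ↥S => f.1 ↑x) v = f.1 v
    by_cases h : v ∈ S
    · exact extendZero_mem _ ⟨v, h⟩
    · rw [extendZero_not_mem _ h, geom_cx_eq_zero G S h]
  continuous_toFun := by
    apply Continuous.subtype_mk
    apply continuous_pi
    intro v
    by_cases h : v ∈ S
    · have : (fun f : geom (indepCx (G.induce S)) => extendZero f.1 v) =
        fun f : geom (indepCx (G.induce S)) => f.1 ⟨v, h⟩ :=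
        funext fun f => extendZero_mem f.1 ⟨v, h⟩
      rw [this]
      exact (continuous_apply _).comp continuous_subtype_val
    · have : (fun f : geom (indepCx (G.induce S)) => extendZero f.1 v) =
        fun _ => (0 : ℝ) := funext fun f => extendZero_not_mem f.1 h
      rw [this]
      exact continuous_const
  continuous_invFun := by
    apply Continuous.subtype_mk
    apply continuous_pi
    intro x
    exact (continuous_apply _).comp continuous_subtype_val

end Bridge
section Fold

variable {V : Type} [DecidableEq V] {G : SimpleGraph V} {S : Set V}

/-- Inclusion of realizations for nested vertex sets. -/
noncomputable def cxIncl {T : Set V} (h : S ⊆ T) : C(geom (cx G S), geom (cx G T)) where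
  toFun f := ⟨f.1, ⟨f.2.1.imp (fun s hs => ⟨cx_mono G h hs.1, hs.2⟩), f.2.2⟩⟩
  continuous_toFun := Continuous.subtype_mk continuous_subtype_val _

/-- The fold retraction on weight functions: move the weight of `x` to `y`. -/
noncomputable def foldFun (x y : V) (f : V → ℝ) : V → ℝ :=
  fun v => if v = x then 0 else if v = y then f y + f x else f v

variable {x y : V}

lemma foldFun_eq_self {f : V → ℝ} (hyx : y ≠ x) (h0 : f x = 0) : foldFun x y f = f := by
  funext v
  unfold foldFun
  by_cases hvx : v = x
  · simp [hvx, h0, Ne.symm hyx]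
  · by_cases hvy : v = y <;> simp [hvx, hvy, h0, hyx]

lemma foldFun_nonneg {f : V → ℝ} (hf : ∀ v, 0 ≤ f v) (v : V) : 0 ≤ foldFun x y f v := by
  unfold foldFun
  by_cases hvx : v = x
  · simp [hvx]
  · by_cases hvy : v = y
    · rw [if_neg hvx, if_pos hvy]
      exact add_nonneg (hf y) (hf x)
    · rw [if_neg hvx, if_neg hvy]
      exact hf v

lemma foldFun_support {f : V → ℝ} :
    Function.support (foldFun x y f) ⊆ Function.support f ∪ {y} := by
  intro v hv
  simp only [Function.mem_support] at hv
  unfold foldFun at hv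
  by_cases hvx : v = x
  · simp [hvx] at hv
  · by_cases hvy : v = y
    · exact Or.inr hvy
    · simp only [hvx, hvy, if_neg, if_false] at hv
      exact Or.inl hv

lemma foldFun_sum {f : V → ℝ} (hyx : y ≠ x) (hf : (Function.support f).Finite) :
    ∑ᶠ v, foldFun x y f v = ∑ᶠ v, f v := by
  have key : foldFun x y f =
      fun v => f v + f x * ((if v = y then 1 else 0) - (if v = x then 1 else 0)) := by
    funext v
    unfold foldFun
    by_cases hvx : v = x
    · simp [hvx, Ne.symm hyx]
    · by_cases hvy : v = y <;> simp [hvx, hvy, hyx] <;> ring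
  have hg : (Function.support
      (fun v => f x * ((if v = y then 1 else 0) - (if v = x then 1 else 0)))).Finite := by
    apply Set.Finite.subset ((Set.finite_singleton y).insert x)
    intro v hv
    simp only [Function.mem_support] at hv
    by_contra hmem
    simp only [Set.mem_insert_iff, Set.mem_singleton_iff, not_or] at hmem
    simp [hmem.1, hmem.2] at hv
  rw [key, finsum_add_distrib hf hg]
  have h2 : ∑ᶠ v, f x * ((if v = y then 1 else 0) - (if v = x then 1 else 0)) = 0 := by
    rw [finsum_eq_finset_sum_of_support_subset _ (s := {x, y}) ?hs]
    · rw [Finset.sum_pair (fun h : x = y => hyx h.symm)]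
      simp [hyx, hyx.symm, fun h : x = y => hyx h.symm]
    · intro v hv
      simp only [Function.mem_support] at hv
      simp only [Finset.coe_insert, Finset.coe_singleton, Set.mem_insert_iff,
        Set.mem_singleton_iff]
      by_contra hmem
      simp only [not_or] at hmem
      simp [hmem.1, hmem.2] at hv
  rw [h2, add_zero]

lemma comb_support_finite (t u : ℝ) {f g : V → ℝ} (hf : (Function.support f).Finite)
    (hg : (Function.support g).Finite) :
    (Function.support (fun v => t * f v + u * g v)).Finite := by
  apply Set.Finite.subset (hf.union hg)
  intro v hv
  simp only [Function.mem_support] at hv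
  by_contra hmem
  simp only [Set.mem_union, Function.mem_support, not_or, not_not] at hmem
  simp [hmem.1, hmem.2] at hv

lemma comb_sum (t u : ℝ) {f g : V → ℝ} (hf : (Function.support f).Finite)
    (hg : (Function.support g).Finite) (hf1 : ∑ᶠ v, f v = 1) (hg1 : ∑ᶠ v, g v = 1) :
    ∑ᶠ v, (t * f v + u * g v) = t + u := by
  have h1 : (Function.support (fun v => t * f v)).Finite :=
    Set.Finite.subset hf (fun v hv => by
      simp only [Function.mem_support] at hv ⊢; exact fun h => hv (by rw [h, mul_zero]))
  have h2 : (Function.support (fun v => u * g v)).Finite :=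
    Set.Finite.subset hg (fun v hv => by
      simp only [Function.mem_support] at hv ⊢; exact fun h => hv (by rw [h, mul_zero]))
  rw [finsum_add_distrib h1 h2, ← mul_finsum f t, ← mul_finsum g u, hf1, hg1,
    mul_one, mul_one]

variable (hy : y ∈ S) (hyx : y ≠ x) (hdom : ∀ w ∈ S, G.Adj y w → G.Adj x w)

include hy hyx hdom in
lemma fold_target_mem (f : geom (cx G S)) :
    ∃ s ∈ cx G (S \ {x}), ∀ v, foldFun x y f.1 v ≠ 0 → v ∈ s := by
  obtain ⟨s, ⟨hsS, hind⟩, hsupp⟩ := f.2.1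
  by_cases h0 : f.1 x = 0
  · refine ⟨s.erase x, ⟨?_, ?_⟩, ?_⟩
    · rw [Finset.coe_erase]
      exact Set.diff_subset_diff_left hsS
    · intro u hu v hv
      exact hind u (Finset.mem_of_mem_erase hu) v (Finset.mem_of_mem_erase hv)
    · intro v hv
      rw [foldFun_eq_self hyx h0] at hv
      have hvx : v ≠ x := fun h => hv (h ▸ h0)
      exact Finset.mem_erase.2 ⟨hvx, hsupp v hv⟩
  · have hxs : x ∈ s := hsupp x h0
    refine ⟨insert y (s.erase x), ⟨?_, ?_⟩, ?_⟩
    · intro v hv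
      simp only [Finset.coe_insert, Set.mem_insert_iff, Finset.coe_erase, Set.mem_diff,
        Set.mem_singleton_iff] at hv
      rcases hv with rfl | ⟨hvs, hvx⟩
      · exact ⟨hy, hyx⟩
      · exact ⟨hsS hvs, hvx⟩
    · intro u hu v hv hadj
      rcases Finset.mem_insert.1 hu with rfl | hu' <;>
        rcases Finset.mem_insert.1 hv with rfl | hv'
      · exact G.irrefl hadj
      · exact hind x hxs v (Finset.mem_of_mem_erase hv')
          (hdom v (hsS (Finset.mem_of_mem_erase hv')) hadj)
      · exact hind x hxs u (Finset.mem_of_mem_erase hu')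
          (hdom u (hsS (Finset.mem_of_mem_erase hu')) hadj.symm)
      · exact hind u (Finset.mem_of_mem_erase hu') v (Finset.mem_of_mem_erase hv') hadj
    · intro v hv
      unfold foldFun at hv
      by_cases hvx : v = x
      · simp [hvx] at hv
      · by_cases hvy : v = y
        · exact Finset.mem_insert.2 (Or.inl hvy)
        · simp only [hvx, hvy, if_neg, if_false] at hv
          exact Finset.mem_insert.2 (Or.inr (Finset.mem_erase.2 ⟨hvx, hsupp v hv⟩))

include hy hyx hdom in
lemma fold_comb_mem (t : ℝ) (f : geom (cx G S)) :
    ∃ s ∈ cx G S, ∀ v, (1 - t) * foldFun x y f.1 v + t * f.1 v ≠ 0 → v ∈ s := by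
  obtain ⟨s, ⟨hsS, hind⟩, hsupp⟩ := f.2.1
  by_cases h0 : f.1 x = 0
  · refine ⟨s, ⟨hsS, hind⟩, fun v hv => ?_⟩
    rw [foldFun_eq_self hyx h0] at hv
    apply hsupp
    intro h
    rw [h] at hv
    simp at hv
  · have hxs : x ∈ s := hsupp x h0
    refine ⟨insert y s, ⟨by rw [Finset.coe_insert]; exact Set.insert_subset hy hsS, ?_⟩, ?_⟩
    · intro u hu v hv hadj
      rcases Finset.mem_insert.1 hu with rfl | hu' <;>
        rcases Finset.mem_insert.1 hv with rfl | hv'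
      · exact G.irrefl hadj
      · exact hind x hxs v hv' (hdom v (hsS hv') hadj)
      · exact hind x hxs u hu' (hdom u (hsS hu') hadj.symm)
      · exact hind u hu' v hv' hadj
    · intro v hv
      by_cases hfv : f.1 v ≠ 0
      · exact Finset.mem_insert.2 (Or.inr (hsupp v hfv))
      · push_neg at hfv
        have hfold : foldFun x y f.1 v ≠ 0 := by
          intro h
          rw [h, hfv] at hv
          simp at hv
        unfold foldFun at hfold
        by_cases hvx : v = x
        · simp [hvx] at hfold
        · by_cases hvy : v = y
          · exact Finset.mem_insert.2 (Or.inl hvy)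
          · simp [hvx, hvy, hfv] at hfold

include hy hyx hdom in
/-- The fold retraction as a continuous map of realizations. -/
noncomputable def foldC : C(geom (cx G S), geom (cx G (S \ {x}))) where
  toFun f := ⟨foldFun x y f.1, fold_target_mem hy hyx hdom f,
    foldFun_nonneg f.2.2.1, by rw [foldFun_sum hyx (geom_support_finite f)]; exact f.2.2.2⟩
  continuous_toFun := by
    apply Continuous.subtype_mk
    apply continuous_pi
    intro v
    unfold foldFun
    by_cases hvx : v = x
    · simp only [hvx, if_pos]
      exact continuous_const
    · by_cases hvy : v = y
      · simp only [if_neg hvx, if_pos hvy]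
        show Continuous fun f : geom (cx G S) => f.1 y + f.1 x
        exact (((continuous_apply y).comp continuous_subtype_val).add
          ((continuous_apply x).comp continuous_subtype_val))
      · simp only [if_neg hvx, if_neg hvy]
        exact (continuous_apply v).comp continuous_subtype_val

include hy hyx hdom in
/-- Folding a vertex `x`, with a witness `y ≠ x` in `S` all of whose `S`-neighbours are
adjacent to `x`, gives a homotopy equivalence after deleting `x`. -/
noncomputable def foldEquiv :
    ContinuousMap.HomotopyEquiv (geom (cx G S)) (geom (cx G (S \ {x}))) where
  toFun := foldC hy hyx hdom
  invFun := cxIncl Set.diff_subset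
  left_inv := by
    constructor
    refine ContinuousMap.Homotopy.mk
      ⟨fun p => ⟨fun v => (1 - (p.1 : ℝ)) * foldFun x y p.2.1 v + (p.1 : ℝ) * p.2.1 v,
        fold_comb_mem hy hyx hdom _ p.2,
        fun v => add_nonneg
          (mul_nonneg (by linarith [unitInterval.le_one p.1])
            (foldFun_nonneg p.2.2.2.1 v))
          (mul_nonneg (unitInterval.nonneg p.1) (p.2.2.2.1 v)),
        by
          rw [comb_sum _ _ (Set.Finite.subset ((geom_support_finite p.2).union
              (Set.finite_singleton y)) foldFun_support) (geom_support_finite p.2)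
            (by rw [foldFun_sum hyx (geom_support_finite p.2)]; exact p.2.2.2.2)
            p.2.2.2.2]
          ring⟩, ?_⟩ ?_ ?_
    · apply Continuous.subtype_mk
      apply continuous_pi
      intro v
      have ht : Continuous fun p : unitInterval × geom (cx G S) => (p.1 : ℝ) :=
        continuous_subtype_val.comp continuous_fst
      have hev : ∀ w : V, Continuous fun p : unitInterval × geom (cx G S) => p.2.1 w :=
        fun w => (continuous_apply w).comp (continuous_subtype_val.comp continuous_snd)
      have hfold : Continuous fun p : unitInterval × geom (cx G S) => foldFun x y p.2.1 v := by
        unfold foldFun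
        by_cases hvx : v = x
        · simp only [hvx, if_pos]
          exact continuous_const
        · by_cases hvy : v = y
          · simp only [if_neg hvx, if_pos hvy]
            exact (hev y).add (hev x)
          · simp only [if_neg hvx, if_neg hvy]
            exact hev v
      exact (((continuous_const.sub ht).mul hfold).add (ht.mul (hev v)))
    · intro f
      apply Subtype.ext
      funext v
      show (1 - (0:ℝ)) * foldFun x y f.1 v + 0 * f.1 v = foldFun x y f.1 v
      ring
    · intro f
      apply Subtype.ext
      funext v
      show (1 - (1:ℝ)) * foldFun x y f.1 v + 1 * f.1 v = f.1 v
      ring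
  right_inv := by
    have heq : (foldC hy hyx hdom).comp (cxIncl Set.diff_subset) =
        ContinuousMap.id (geom (cx G (S \ {x}))) := by
      apply ContinuousMap.ext
      intro f
      apply Subtype.ext
      show foldFun x y f.1 = f.1
      exact foldFun_eq_self hyx (geom_cx_eq_zero G _ (fun h : x ∈ S \ {x} => h.2 rfl))
    rw [heq]

end Fold
section GraphFacts

lemma gRel_aa (n i i' : ℕ) : gRel n (.a i) (.a i') ↔ False := Iff.rfl
lemma gRel_ab (n i i' j : ℕ) : gRel n (.a i) (.b i' j) ↔ (i' = i + 1 ∧ (j = 1 ∨ j = n - 1)) := Iff.rfl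
lemma gRel_ac (n i i' j : ℕ) : gRel n (.a i) (.c i' j) ↔ (i' = i ∧ (j = 1 ∨ j = n - 1)) := Iff.rfl
lemma gRel_ba (n i j i' : ℕ) : gRel n (.b i j) (.a i') ↔ False := Iff.rfl
lemma gRel_bb (n i j i' j' : ℕ) : gRel n (.b i j) (.b i' j') ↔
    ((i' = i ∧ j' = j + 1) ∨ (i' = i + 1 ∧ j = n - 1 ∧ j' = 1)) := Iff.rfl
lemma gRel_bc (n i j i' j' : ℕ) : gRel n (.b i j) (.c i' j') ↔ False := Iff.rfl
lemma gRel_ca (n i j i' : ℕ) : gRel n (.c i j) (.a i') ↔ False := Iff.rfl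
lemma gRel_cb (n i j i' j' : ℕ) : gRel n (.c i j) (.b i' j') ↔ False := Iff.rfl
lemma gRel_cc (n i j i' j' : ℕ) : gRel n (.c i j) (.c i' j') ↔
    ((i' = i ∧ j' = j + 1) ∨ (i' = i + 1 ∧ j = n - 1 ∧ j' = 1)) := Iff.rfl

lemma gFull_adj (n : ℕ) (u w : GV) :
    (gFull n).Adj u w ↔ u ≠ w ∧ (gRel n u w ∨ gRel n w u) := SimpleGraph.fromRel_adj _ _ _

lemma mem_GV_a (n t i : ℕ) : GV.a i ∈ GVset n t ↔ i ≤ t := Iff.rfl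
lemma mem_GV_b (n t i j : ℕ) : GV.b i j ∈ GVset n t ↔ (1 ≤ i ∧ i ≤ t ∧ 1 ≤ j ∧ j ≤ n-1) := Iff.rfl
lemma mem_GV_c (n t i j : ℕ) : GV.c i j ∈ GVset n t ↔ (1 ≤ i ∧ i ≤ t ∧ 1 ≤ j ∧ j ≤ n-1) := Iff.rfl

lemma mem_HV_a (n t i : ℕ) : GV.a i ∈ HVset n t ↔ i ≤ t := by
  simp [HVset, mem_GV_a, Set.mem_insert_iff]

lemma mem_HV_b (n t i j : ℕ) : GV.b i j ∈ HVset n t ↔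
    (1 ≤ i ∧ i ≤ t ∧ 1 ≤ j ∧ j ≤ n-1) ∨ (i = t+1 ∧ j = 1) := by
  simp [HVset, mem_GV_b, Set.mem_insert_iff]
  tauto

lemma mem_HV_c (n t i j : ℕ) : GV.c i j ∈ HVset n t ↔
    (1 ≤ i ∧ i ≤ t ∧ 1 ≤ j ∧ j ≤ n-1) ∨ (i = t+1 ∧ j = 1) := by
  simp [HVset, mem_GV_c, Set.mem_insert_iff]
  tauto

end GraphFacts

/-! ### The fold chain for `H_{3m,1}` -/

attribute [local simp] gRel_aa gRel_ab gRel_ac gRel_ba gRel_bb gRel_bc gRel_ca gRel_cb gRel_cc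
  mem_GV_a mem_GV_b mem_GV_c mem_HV_a mem_HV_b mem_HV_c

/-- Transporting a realization along an equality of vertex sets. -/
noncomputable def setCastEquiv {V : Type} {G : SimpleGraph V} {S T : Set V} (h : S = T) :
    ContinuousMap.HomotopyEquiv (geom (cx G S)) (geom (cx G T)) := by
  subst h; exact ContinuousMap.HomotopyEquiv.refl _

def Sa (m : ℕ) : Set GV := HVset (3*m) 1 \ {GV.a 1}
def Sb (m : ℕ) : Set GV := Sa m \ {GV.c 1 (3*m-2)}
def Sc (m : ℕ) : Set GV := Sb m \ {GV.a 0}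
def Sd (m : ℕ) : Set GV := Sc m \ {GV.b 1 (3*m-2)}

def Bdel (k : ℕ) : Set GV :=
  {v | match v with | .b i j => i = 1 ∧ 3 ∣ j ∧ 1 ≤ j ∧ j ≤ 3*k | _ => False}
def Cdel (k : ℕ) : Set GV :=
  {v | match v with | .c i j => i = 1 ∧ 3 ∣ j ∧ 1 ≤ j ∧ j ≤ 3*k | _ => False}

lemma mem_Bdel_a (k i : ℕ) : GV.a i ∈ Bdel k ↔ False := Iff.rfl
lemma mem_Bdel_b (k i j : ℕ) : GV.b i j ∈ Bdel k ↔ (i = 1 ∧ 3 ∣ j ∧ 1 ≤ j ∧ j ≤ 3*k) := Iff.rfl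
lemma mem_Bdel_c (k i j : ℕ) : GV.c i j ∈ Bdel k ↔ False := Iff.rfl
lemma mem_Cdel_a (k i : ℕ) : GV.a i ∈ Cdel k ↔ False := Iff.rfl
lemma mem_Cdel_b (k i j : ℕ) : GV.b i j ∈ Cdel k ↔ False := Iff.rfl
lemma mem_Cdel_c (k i j : ℕ) : GV.c i j ∈ Cdel k ↔ (i = 1 ∧ 3 ∣ j ∧ 1 ≤ j ∧ j ≤ 3*k) := Iff.rfl

attribute [local simp] mem_Bdel_a mem_Bdel_b mem_Bdel_c mem_Cdel_a mem_Cdel_b mem_Cdel_c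

lemma hdom1 (m : ℕ) (hm : 1 ≤ m) : ∀ w ∈ HVset (3*m) 1,
    (gFull (3*m)).Adj (GV.c 2 1) w → (gFull (3*m)).Adj (GV.a 1) w := by
  intro w hw hadj
  rw [gFull_adj] at hadj
  obtain ⟨hne, h | h⟩ := hadj <;> rcases w with i | ⟨i, j⟩ | ⟨i, j⟩ <;>
    simp at h <;> rw [gFull_adj] <;> simp at hw ⊢ <;> omega

lemma hdom2 (m : ℕ) (hm : 1 ≤ m) : ∀ w ∈ Sa m,
    (gFull (3*m)).Adj (GV.c 2 1) w → (gFull (3*m)).Adj (GV.c 1 (3*m-2)) w := by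
  intro w hw hadj
  rw [gFull_adj] at hadj
  obtain ⟨hne, h | h⟩ := hadj <;> rcases w with i | ⟨i, j⟩ | ⟨i, j⟩ <;>
    simp at h <;> rw [gFull_adj] <;> simp [Sa] at hw ⊢ <;> omega

lemma hdom3 (m : ℕ) (hm : 1 ≤ m) : ∀ w ∈ Sb m,
    (gFull (3*m)).Adj (GV.b 2 1) w → (gFull (3*m)).Adj (GV.a 0) w := by
  intro w hw hadj
  rw [gFull_adj] at hadj
  obtain ⟨hne, h | h⟩ := hadj <;> rcases w with i | ⟨i, j⟩ | ⟨i, j⟩ <;>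
    simp at h <;> rw [gFull_adj] <;> simp [Sb, Sa] at hw ⊢ <;> omega

lemma hdom4 (m : ℕ) (hm : 1 ≤ m) : ∀ w ∈ Sc m,
    (gFull (3*m)).Adj (GV.b 2 1) w → (gFull (3*m)).Adj (GV.b 1 (3*m-2)) w := by
  intro w hw hadj
  rw [gFull_adj] at hadj
  obtain ⟨hne, h | h⟩ := hadj <;> rcases w with i | ⟨i, j⟩ | ⟨i, j⟩ <;>
    simp at h <;> rw [gFull_adj] <;> simp [Sc, Sb, Sa] at hw ⊢ <;> omega

lemma hdomB (m k : ℕ) (hm : 1 ≤ m) (hk : k + 2 ≤ m) : ∀ w ∈ Sd m \ Bdel k,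
    (gFull (3*m)).Adj (GV.b 1 (3*k+1)) w → (gFull (3*m)).Adj (GV.b 1 (3*k+3)) w := by
  intro w hw hadj
  rw [gFull_adj] at hadj
  obtain ⟨hne, h | h⟩ := hadj <;> rcases w with i | ⟨i, j⟩ | ⟨i, j⟩ <;>
    simp at h <;> rw [gFull_adj] <;> simp [Sd, Sc, Sb, Sa] at hw ⊢ <;> omega

lemma hdomC (m k : ℕ) (hm : 1 ≤ m) (hk : k + 2 ≤ m) : ∀ w ∈ (Sd m \ Bdel (m-1)) \ Cdel k,
    (gFull (3*m)).Adj (GV.c 1 (3*k+1)) w → (gFull (3*m)).Adj (GV.c 1 (3*k+3)) w := by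
  intro w hw hadj
  rw [gFull_adj] at hadj
  obtain ⟨hne, h | h⟩ := hadj <;> rcases w with i | ⟨i, j⟩ | ⟨i, j⟩ <;>
    simp at h <;> rw [gFull_adj] <;> simp [Sd, Sc, Sb, Sa] at hw ⊢ <;> omega

lemma bchain (m : ℕ) (hm : 1 ≤ m) (k : ℕ) (hk : k ≤ m - 1) :
    Nonempty (ContinuousMap.HomotopyEquiv (geom (cx (gFull (3*m)) (Sd m)))
      (geom (cx (gFull (3*m)) (Sd m \ Bdel k)))) := by
  induction k with
  | zero =>
    refine ⟨setCastEquiv ?_⟩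
    ext w
    rcases w with i | ⟨i, j⟩ | ⟨i, j⟩ <;> simp [Sd, Sc, Sb, Sa] <;> omega
  | succ k ih =>
    obtain ⟨e1⟩ := ih (by omega)
    have e2 := foldEquiv (G := gFull (3*m)) (S := Sd m \ Bdel k)
      (x := GV.b 1 (3*k+3)) (y := GV.b 1 (3*k+1))
      (by simp [Sd, Sc, Sb, Sa] <;> omega) (by simp <;> omega) (hdomB m k hm (by omega))
    refine ⟨e1.trans (e2.trans (setCastEquiv ?_))⟩
    ext w
    rcases w with i | ⟨i, j⟩ | ⟨i, j⟩ <;> simp [Sd, Sc, Sb, Sa] <;> omega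

lemma cchain (m : ℕ) (hm : 1 ≤ m) (k : ℕ) (hk : k ≤ m - 1) :
    Nonempty (ContinuousMap.HomotopyEquiv (geom (cx (gFull (3*m)) (Sd m \ Bdel (m-1))))
      (geom (cx (gFull (3*m)) ((Sd m \ Bdel (m-1)) \ Cdel k)))) := by
  induction k with
  | zero =>
    refine ⟨setCastEquiv ?_⟩
    ext w
    rcases w with i | ⟨i, j⟩ | ⟨i, j⟩ <;> simp [Sd, Sc, Sb, Sa] <;> omega
  | succ k ih =>
    obtain ⟨e1⟩ := ih (by omega)
    have e2 := foldEquiv (G := gFull (3*m)) (S := (Sd m \ Bdel (m-1)) \ Cdel k)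
      (x := GV.c 1 (3*k+3)) (y := GV.c 1 (3*k+1))
      (by simp [Sd, Sc, Sb, Sa] <;> omega) (by simp <;> omega) (hdomC m k hm (by omega))
    refine ⟨e1.trans (e2.trans (setCastEquiv ?_))⟩
    ext w
    rcases w with i | ⟨i, j⟩ | ⟨i, j⟩ <;> simp [Sd, Sc, Sb, Sa] <;> omega

/-- The final vertex set: a perfect matching with `2m` edges. -/
def Fset (m : ℕ) : Set GV := (Sd m \ Bdel (m-1)) \ Cdel (m-1)

/-- The chain of folds from `H_{3m,1}` down to the matching. -/
lemma chainEquiv (m : ℕ) (hm : 1 ≤ m) :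
    Nonempty (ContinuousMap.HomotopyEquiv (geom (indepCx (lineH (3*m) 1)))
      (geom (cx (gFull (3*m)) (Fset m)))) := by
  have e0 := (bridgeHomeo (gFull (3*m)) (HVset (3*m) 1)).toHomotopyEquiv
  have e1 := foldEquiv (G := gFull (3*m)) (S := HVset (3*m) 1)
    (x := GV.a 1) (y := GV.c 2 1) (by simp) (by simp) (hdom1 m hm)
  have e2 := foldEquiv (G := gFull (3*m)) (S := Sa m)
    (x := GV.c 1 (3*m-2)) (y := GV.c 2 1) (by simp [Sa] <;> omega) (by simp <;> omega)
    (hdom2 m hm)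
  have e3 := foldEquiv (G := gFull (3*m)) (S := Sb m)
    (x := GV.a 0) (y := GV.b 2 1) (by simp [Sb, Sa] <;> omega) (by simp) (hdom3 m hm)
  have e4 := foldEquiv (G := gFull (3*m)) (S := Sc m)
    (x := GV.b 1 (3*m-2)) (y := GV.b 2 1) (by simp [Sc, Sb, Sa] <;> omega) (by simp <;> omega)
    (hdom4 m hm)
  obtain ⟨eb⟩ := bchain m hm (m-1) le_rfl
  obtain ⟨ec⟩ := cchain m hm (m-1) le_rfl
  exact ⟨e0.trans (e1.trans (e2.trans (e3.trans (e4.trans (eb.trans ec)))))⟩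
/-! ### The `ℓ¹`-sphere is homeomorphic to the Euclidean sphere -/

section L1

variable (N : ℕ)

/-- The `ℓ¹` unit sphere in Euclidean space. -/
def L1S : Type :=
  {z : EuclideanSpace ℝ (Fin (N+1)) // ∑ i, |z i| = 1}

noncomputable instance : TopologicalSpace (L1S N) := instTopologicalSpaceSubtype

lemma l1_continuous : Continuous fun z : EuclideanSpace ℝ (Fin (N+1)) => ∑ i, |z i| := by
  apply continuous_finset_sum
  intro i _
  exact ((continuous_apply i).comp (PiLp.continuous_ofLp 2 _)).abs

lemma l1_pos {z : EuclideanSpace ℝ (Fin (N+1))} (hz : z ≠ 0) : 0 < ∑ i, |z i| := by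
  obtain ⟨i, hi⟩ : ∃ i, z i ≠ 0 := by
    by_contra hc
    push_neg at hc
    exact hz ((WithLp.ext_iff 2).2 (funext fun i => hc i))
  exact Finset.sum_pos' (fun j _ => abs_nonneg _) ⟨i, Finset.mem_univ i, abs_pos.2 hi⟩

lemma l1_ne_zero {z : EuclideanSpace ℝ (Fin (N+1))} (hz : ∑ i, |z i| = 1) : z ≠ 0 := by
  intro h
  rw [h] at hz
  simp at hz

lemma l1_smul (c : ℝ) (z : EuclideanSpace ℝ (Fin (N+1))) :
    ∑ i, |(c • z) i| = |c| * ∑ i, |z i| := by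
  rw [Finset.mul_sum]
  congr 1
  funext i
  rw [PiLp.smul_apply, smul_eq_mul, abs_mul]

/-- The radial homeomorphism from the `ℓ¹` sphere to the Euclidean sphere. -/
noncomputable def l1Homeo : L1S N ≃ₜ Sph N where
  toFun z := ⟨‖z.1‖⁻¹ • z.1, by
    rw [mem_sphere_zero_iff_norm, norm_smul, norm_inv, norm_norm,
      inv_mul_cancel₀ (norm_ne_zero_iff.2 (l1_ne_zero N z.2))]⟩
  invFun w := ⟨(∑ i, |w.1 i|)⁻¹ • w.1, by
    rw [l1_smul]
    have hw : ‖w.1‖ = 1 := mem_sphere_zero_iff_norm.1 w.2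
    have hne : w.1 ≠ 0 := fun h => by rw [h] at hw; simp at hw
    rw [abs_inv, abs_of_pos (l1_pos N hne), inv_mul_cancel₀ (ne_of_gt (l1_pos N hne))]⟩
  left_inv z := by
    apply Subtype.ext
    have hne : z.1 ≠ 0 := l1_ne_zero N z.2
    show (∑ i, |(‖z.1‖⁻¹ • z.1) i|)⁻¹ • (‖z.1‖⁻¹ • z.1) = z.1
    rw [l1_smul, z.2, mul_one, smul_smul, abs_inv, abs_norm, inv_inv,
      mul_inv_cancel₀ (norm_ne_zero_iff.2 hne), one_smul]
  right_inv w := by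
    apply Subtype.ext
    have hw : ‖w.1‖ = 1 := mem_sphere_zero_iff_norm.1 w.2
    have hne : w.1 ≠ 0 := fun h => by rw [h] at hw; simp at hw
    show ‖(∑ i, |w.1 i|)⁻¹ • w.1‖⁻¹ • ((∑ i, |w.1 i|)⁻¹ • w.1) = w.1
    rw [norm_smul, hw, mul_one, norm_inv, Real.norm_eq_abs, abs_of_pos (l1_pos N hne),
      inv_inv, smul_smul, mul_inv_cancel₀ (ne_of_gt (l1_pos N hne)), one_smul]
  continuous_toFun := by
    apply Continuous.subtype_mk
    have hc : Continuous fun z : L1S N => ‖z.1‖⁻¹ :=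
      (continuous_norm.comp continuous_subtype_val).inv₀
        (fun z => norm_ne_zero_iff.2 (l1_ne_zero N z.2))
    exact hc.smul continuous_subtype_val
  continuous_invFun := by
    apply Continuous.subtype_mk
    have hc : Continuous fun w : Sph N => (∑ i, |w.1 i|)⁻¹ := by
      refine ((l1_continuous N).comp continuous_subtype_val).inv₀ ?_
      intro w
      have hw : ‖w.1‖ = 1 := mem_sphere_zero_iff_norm.1 w.2
      have hne : w.1 ≠ 0 := fun h => by rw [h] at hw; simp at hw
      exact ne_of_gt (l1_pos N hne)
    exact hc.smul continuous_subtype_val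

end L1
/-! ### The final matching and its pairing structure -/

/-- First vertices of the matching pairs. -/
def pv (m i : ℕ) : GV :=
  if i + 1 < m then .b 1 (3*i+1) else if i + 1 = m then .b 1 (3*m-1)
  else if i + 1 < 2*m then .c 1 (3*(i-m)+1) else .c 1 (3*m-1)

/-- Second vertices of the matching pairs. -/
def qv (m i : ℕ) : GV :=
  if i + 1 < m then .b 1 (3*i+2) else if i + 1 = m then .b 2 1
  else if i + 1 < 2*m then .c 1 (3*(i-m)+2) else .c 2 1

attribute [local simp] gRel_aa gRel_ab gRel_ac gRel_ba gRel_bb gRel_bc gRel_ca gRel_cb gRel_cc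
  mem_GV_a mem_GV_b mem_GV_c mem_HV_a mem_HV_b mem_HV_c
  mem_Bdel_a mem_Bdel_b mem_Bdel_c mem_Cdel_a mem_Cdel_b mem_Cdel_c

lemma pv_mem (m : ℕ) (hm : 1 ≤ m) (i : ℕ) (hi : i < 2*m) : pv m i ∈ Fset m := by
  unfold pv
  split_ifs <;> simp [Fset, Sd, Sc, Sb, Sa] <;> omega

lemma qv_mem (m : ℕ) (hm : 1 ≤ m) (i : ℕ) (hi : i < 2*m) : qv m i ∈ Fset m := by
  unfold qv
  split_ifs <;> simp [Fset, Sd, Sc, Sb, Sa] <;> omega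

lemma pair_adj (m : ℕ) (hm : 1 ≤ m) (i : ℕ) (hi : i < 2*m) :
    (gFull (3*m)).Adj (pv m i) (qv m i) := by
  unfold pv qv
  rw [gFull_adj]
  split_ifs <;> simp <;> omega

lemma no_adj_pp (m : ℕ) (hm : 1 ≤ m) (i j : ℕ) (hi : i < 2*m) (hj : j < 2*m) :
    ¬ (gFull (3*m)).Adj (pv m i) (pv m j) := by
  unfold pv
  rw [gFull_adj]
  split_ifs <;> simp <;> omega

lemma no_adj_qq (m : ℕ) (hm : 1 ≤ m) (i j : ℕ) (hi : i < 2*m) (hj : j < 2*m) :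
    ¬ (gFull (3*m)).Adj (qv m i) (qv m j) := by
  unfold qv
  rw [gFull_adj]
  split_ifs <;> simp <;> omega

lemma no_adj_pq (m : ℕ) (hm : 1 ≤ m) (i j : ℕ) (hi : i < 2*m) (hj : j < 2*m) (hij : i ≠ j) :
    ¬ (gFull (3*m)).Adj (pv m i) (qv m j) := by
  unfold pv qv
  rw [gFull_adj]
  split_ifs <;> simp <;> omega

lemma pv_inj (m : ℕ) (hm : 1 ≤ m) (i j : ℕ) (hi : i < 2*m) (hj : j < 2*m)
    (h : pv m i = pv m j) : i = j := by
  unfold pv at h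
  split_ifs at h <;> simp at h <;> omega

lemma qv_inj (m : ℕ) (hm : 1 ≤ m) (i j : ℕ) (hi : i < 2*m) (hj : j < 2*m)
    (h : qv m i = qv m j) : i = j := by
  unfold qv at h
  split_ifs at h <;> simp at h <;> omega

lemma pv_ne_qv (m : ℕ) (hm : 1 ≤ m) (i j : ℕ) (hi : i < 2*m) (hj : j < 2*m) :
    pv m i ≠ qv m j := by
  unfold pv qv
  split_ifs <;> simp <;> omega

lemma pv_1 (m i : ℕ) (h : i + 1 < m) : pv m i = .b 1 (3*i+1) := by unfold pv; rw [if_pos h]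
lemma pv_2 (m i : ℕ) (h1 : ¬ i + 1 < m) (h2 : i + 1 = m) : pv m i = .b 1 (3*m-1) := by
  unfold pv; rw [if_neg h1, if_pos h2]
lemma pv_3 (m i : ℕ) (h1 : ¬ i + 1 < m) (h2 : ¬ i + 1 = m) (h3 : i + 1 < 2*m) :
    pv m i = .c 1 (3*(i-m)+1) := by unfold pv; rw [if_neg h1, if_neg h2, if_pos h3]
lemma pv_4 (m i : ℕ) (h1 : ¬ i + 1 < m) (h2 : ¬ i + 1 = m) (h3 : ¬ i + 1 < 2*m) :
    pv m i = .c 1 (3*m-1) := by unfold pv; rw [if_neg h1, if_neg h2, if_neg h3]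
lemma qv_1 (m i : ℕ) (h : i + 1 < m) : qv m i = .b 1 (3*i+2) := by unfold qv; rw [if_pos h]
lemma qv_2 (m i : ℕ) (h1 : ¬ i + 1 < m) (h2 : i + 1 = m) : qv m i = .b 2 1 := by
  unfold qv; rw [if_neg h1, if_pos h2]
lemma qv_3 (m i : ℕ) (h1 : ¬ i + 1 < m) (h2 : ¬ i + 1 = m) (h3 : i + 1 < 2*m) :
    qv m i = .c 1 (3*(i-m)+2) := by unfold qv; rw [if_neg h1, if_neg h2, if_pos h3]
lemma qv_4 (m i : ℕ) (h1 : ¬ i + 1 < m) (h2 : ¬ i + 1 = m) (h3 : ¬ i + 1 < 2*m) :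
    qv m i = .c 2 1 := by unfold qv; rw [if_neg h1, if_neg h2, if_neg h3]

lemma cover (m : ℕ) (hm : 1 ≤ m) (w : GV) (hw : w ∈ Fset m) :
    ∃ i, i < 2*m ∧ (w = pv m i ∨ w = qv m i) := by
  rcases w with i | ⟨i, j⟩ | ⟨i, j⟩ <;> simp [Fset, Sd, Sc, Sb, Sa] at hw
  · exfalso; omega
  · -- b case
    by_cases hi2 : i = 2
    · obtain rfl : j = 1 := by omega
      subst hi2
      exact ⟨m - 1, by omega, Or.inr (by rw [qv_2 m (m-1) (by omega) (by omega)])⟩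
    · obtain rfl : i = 1 := by omega
      by_cases hj : j = 3*m - 1
      · subst hj
        exact ⟨m - 1, by omega, Or.inl (by rw [pv_2 m (m-1) (by omega) (by omega)])⟩
      · have hnd : ¬ 3 ∣ j := by omega
        by_cases hj1 : j % 3 = 1
        · refine ⟨j / 3, by omega, Or.inl ?_⟩
          rw [pv_1 m (j/3) (by omega)]
          congr 1
          omega
        · refine ⟨j / 3, by omega, Or.inr ?_⟩
          rw [qv_1 m (j/3) (by omega)]
          congr 1
          omega
  · -- c case
    by_cases hi2 : i = 2
    · obtain rfl : j = 1 := by omega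
      subst hi2
      exact ⟨2*m - 1, by omega, Or.inr (by rw [qv_4 m (2*m-1) (by omega) (by omega) (by omega)])⟩
    · obtain rfl : i = 1 := by omega
      by_cases hj : j = 3*m - 1
      · subst hj
        exact ⟨2*m - 1, by omega,
          Or.inl (by rw [pv_4 m (2*m-1) (by omega) (by omega) (by omega)])⟩
      · have hnd : ¬ 3 ∣ j := by omega
        by_cases hj1 : j % 3 = 1
        · refine ⟨m + j / 3, by omega, Or.inl ?_⟩
          rw [pv_3 m (m + j/3) (by omega) (by omega) (by omega)]
          congr 1
          omega
        · refine ⟨m + j / 3, by omega, Or.inr ?_⟩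
          rw [qv_3 m (m + j/3) (by omega) (by omega) (by omega)]
          congr 1
          omega
/-! ### The matching complex realization is the `ℓ¹` sphere -/

section FinalHomeo

variable (m : ℕ)

lemma max_add_abs (a : ℝ) : max a 0 + max (-a) 0 = |a| := by
  rcases le_total 0 a with h | h
  · rw [max_eq_left h, max_eq_right (neg_nonpos.2 h), add_zero, abs_of_nonneg h]
  · rw [max_eq_right h, max_eq_left (neg_nonneg.2 h), zero_add, abs_of_nonpos h]

lemma max_sub_self (a : ℝ) : max a 0 - max (-a) 0 = a := by
  rcases le_total 0 a with h | h
  · rw [max_eq_left h, max_eq_right (neg_nonpos.2 h), sub_zero]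
  · rw [max_eq_right h, max_eq_left (neg_nonneg.2 h), zero_sub, neg_neg]

lemma fin_lt (hm : 1 ≤ m) (i : Fin (2*m-1+1)) : (i : ℕ) < 2*m := by
  have := i.2
  omega

/-- The finset of first pair-vertices. -/
noncomputable def TP : Finset GV := Finset.univ.image (fun i : Fin (2*m-1+1) => pv m ↑i)
/-- The finset of second pair-vertices. -/
noncomputable def TQ : Finset GV := Finset.univ.image (fun i : Fin (2*m-1+1) => qv m ↑i)
/-- The finset of all matched vertices. -/
noncomputable def TT : Finset GV := TP m ∪ TQ m

lemma Fset_sub_T (hm : 1 ≤ m) : Fset m ⊆ ↑(TT m) := by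
  intro w hw
  obtain ⟨i, hi, h | h⟩ := cover m hm w hw
  · exact Finset.mem_union_left _ (Finset.mem_image.2 ⟨⟨i, by omega⟩, Finset.mem_univ _, h.symm⟩)
  · exact Finset.mem_union_right _ (Finset.mem_image.2 ⟨⟨i, by omega⟩, Finset.mem_univ _, h.symm⟩)

lemma disj_TP_TQ (hm : 1 ≤ m) : Disjoint (TP m) (TQ m) := by
  rw [Finset.disjoint_left]
  intro w hwP hwQ
  obtain ⟨i, _, rfl⟩ := Finset.mem_image.1 hwP
  obtain ⟨j, _, hj⟩ := Finset.mem_image.1 hwQ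
  exact pv_ne_qv m hm ↑i ↑j (fin_lt m hm i) (fin_lt m hm j) hj.symm

lemma f_pair_zero (hm : 1 ≤ m) (f : geom (cx (gFull (3*m)) (Fset m))) (i : ℕ) (hi : i < 2*m) :
    f.1 (pv m i) = 0 ∨ f.1 (qv m i) = 0 := by
  by_contra h
  push_neg at h
  obtain ⟨s, ⟨hsF, hind⟩, hsupp⟩ := f.2.1
  exact hind _ (hsupp _ h.1) _ (hsupp _ h.2) (pair_adj m hm i hi)

lemma geom_F_nonneg {f : geom (cx (gFull (3*m)) (Fset m))} (v : GV) : 0 ≤ f.1 v := f.2.2.1 v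

lemma phi_sum (hm : 1 ≤ m) (f : geom (cx (gFull (3*m)) (Fset m))) :
    ∑ i : Fin (2*m-1+1), |f.1 (pv m ↑i) - f.1 (qv m ↑i)| = 1 := by
  have habs : ∀ i : Fin (2*m-1+1),
      |f.1 (pv m ↑i) - f.1 (qv m ↑i)| = f.1 (pv m ↑i) + f.1 (qv m ↑i) := by
    intro i
    rcases f_pair_zero m hm f ↑i (fin_lt m hm i) with h | h
    · rw [h, zero_sub, abs_neg, abs_of_nonneg (geom_F_nonneg m _), zero_add]
    · rw [h, sub_zero, abs_of_nonneg (geom_F_nonneg m _), add_zero]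
  rw [Finset.sum_congr rfl (fun i _ => habs i), Finset.sum_add_distrib]
  have hinjP : ∀ x ∈ (Finset.univ : Finset (Fin (2*m-1+1))), ∀ y ∈ (Finset.univ : Finset (Fin (2*m-1+1))),
      pv m ↑x = pv m ↑y → x = y := fun x _ y _ h =>
    Fin.ext (pv_inj m hm ↑x ↑y (fin_lt m hm x) (fin_lt m hm y) h)
  have hinjQ : ∀ x ∈ (Finset.univ : Finset (Fin (2*m-1+1))), ∀ y ∈ (Finset.univ : Finset (Fin (2*m-1+1))),
      qv m ↑x = qv m ↑y → x = y := fun x _ y _ h =>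
    Fin.ext (qv_inj m hm ↑x ↑y (fin_lt m hm x) (fin_lt m hm y) h)
  rw [← Finset.sum_image (s := Finset.univ) (g := fun i : Fin (2*m-1+1) => pv m ↑i)
      (f := f.1) hinjP,
    ← Finset.sum_image (s := Finset.univ) (g := fun i : Fin (2*m-1+1) => qv m ↑i)
      (f := f.1) hinjQ,
    show Finset.image (fun i : Fin (2*m-1+1) => pv m ↑i) Finset.univ = TP m from rfl,
    show Finset.image (fun i : Fin (2*m-1+1) => qv m ↑i) Finset.univ = TQ m from rfl,
    ← Finset.sum_union (disj_TP_TQ m hm)]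
  have hsupp : Function.support f.1 ⊆ ↑(TT m) := by
    obtain ⟨s, ⟨hsF, _⟩, hs⟩ := f.2.1
    exact fun v hv => Fset_sub_T m hm (hsF (hs v hv))
  rw [show TP m ∪ TQ m = TT m from rfl, ← finsum_eq_finset_sum_of_support_subset f.1 hsupp]
  exact f.2.2.2

/-- The inverse weight function attached to a point of the `ℓ¹` sphere. -/
noncomputable def psiFun (z : EuclideanSpace ℝ (Fin (2*m-1+1))) : GV → ℝ := fun v =>
  ∑ i : Fin (2*m-1+1), if v = pv m ↑i then max (z i) 0
    else if v = qv m ↑i then max (-(z i)) 0 else 0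

lemma psi_pv (hm : 1 ≤ m) (z : EuclideanSpace ℝ (Fin (2*m-1+1))) (i0 : Fin (2*m-1+1)) :
    psiFun m z (pv m ↑i0) = max (z i0) 0 := by
  unfold psiFun
  rw [Finset.sum_eq_single i0]
  · rw [if_pos rfl]
  · intro j _ hj
    rw [if_neg, if_neg]
    · exact pv_ne_qv m hm ↑i0 ↑j (fin_lt m hm i0) (fin_lt m hm j)
    · intro h
      exact hj (Fin.ext (pv_inj m hm ↑i0 ↑j (fin_lt m hm i0) (fin_lt m hm j) h)).symm
  · intro h
    exact absurd (Finset.mem_univ i0) h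

lemma psi_qv (hm : 1 ≤ m) (z : EuclideanSpace ℝ (Fin (2*m-1+1))) (i0 : Fin (2*m-1+1)) :
    psiFun m z (qv m ↑i0) = max (-(z i0)) 0 := by
  unfold psiFun
  rw [Finset.sum_eq_single i0]
  · rw [if_neg (pv_ne_qv m hm ↑i0 ↑i0 (fin_lt m hm i0) (fin_lt m hm i0)).symm, if_pos rfl]
  · intro j _ hj
    rw [if_neg, if_neg]
    · intro h
      exact hj (Fin.ext (qv_inj m hm ↑i0 ↑j (fin_lt m hm i0) (fin_lt m hm j) h)).symm
    · exact (pv_ne_qv m hm ↑j ↑i0 (fin_lt m hm j) (fin_lt m hm i0)).symm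
  · intro h
    exact absurd (Finset.mem_univ i0) h

lemma psi_support (hm : 1 ≤ m) (z : EuclideanSpace ℝ (Fin (2*m-1+1))) (v : GV)
    (hv : psiFun m z v ≠ 0) :
    ∃ i : Fin (2*m-1+1), (v = pv m ↑i ∧ 0 < z i) ∨ (v = qv m ↑i ∧ z i < 0) := by
  obtain ⟨i, _, hi⟩ := Finset.exists_ne_zero_of_sum_ne_zero hv
  by_cases h1 : v = pv m ↑i
  · rw [if_pos h1] at hi
    refine ⟨i, Or.inl ⟨h1, ?_⟩⟩
    rcases le_or_gt (z i) 0 with h | h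
    · exact absurd (max_eq_right h) hi
    · exact h
  · rw [if_neg h1] at hi
    by_cases h2 : v = qv m ↑i
    · rw [if_pos h2] at hi
      refine ⟨i, Or.inr ⟨h2, ?_⟩⟩
      rcases le_or_gt 0 (z i) with h | h
      · exact absurd (max_eq_right (neg_nonpos.2 h)) hi
      · exact h
    · rw [if_neg h2] at hi
      exact absurd rfl hi

/-- The choice of a supported vertex in each pair. -/
noncomputable def chooseF (z : EuclideanSpace ℝ (Fin (2*m-1+1))) (i : Fin (2*m-1+1)) : GV :=
  if 0 ≤ z i then pv m ↑i else qv m ↑i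

lemma chooseF_mem (hm : 1 ≤ m) (z : EuclideanSpace ℝ (Fin (2*m-1+1))) (i : Fin (2*m-1+1)) :
    chooseF m z i ∈ Fset m := by
  unfold chooseF
  split_ifs
  · exact pv_mem m hm ↑i (fin_lt m hm i)
  · exact qv_mem m hm ↑i (fin_lt m hm i)

lemma chooseF_no_adj (hm : 1 ≤ m) (z : EuclideanSpace ℝ (Fin (2*m-1+1)))
    (i j : Fin (2*m-1+1)) : ¬ (gFull (3*m)).Adj (chooseF m z i) (chooseF m z j) := by
  by_cases hij : i = j
  · subst hij
    exact fun h => (gFull (3*m)).irrefl h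
  · have hij' : (i : ℕ) ≠ (j : ℕ) := fun h => hij (Fin.ext h)
    unfold chooseF
    split_ifs
    · exact no_adj_pp m hm ↑i ↑j (fin_lt m hm i) (fin_lt m hm j)
    · exact no_adj_pq m hm ↑i ↑j (fin_lt m hm i) (fin_lt m hm j) hij'
    · intro h
      exact no_adj_pq m hm ↑j ↑i (fin_lt m hm j) (fin_lt m hm i) (Ne.symm hij') h.symm
    · exact no_adj_qq m hm ↑i ↑j (fin_lt m hm i) (fin_lt m hm j)

lemma psi_mem (hm : 1 ≤ m) (z : EuclideanSpace ℝ (Fin (2*m-1+1))) :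
    ∃ s ∈ cx (gFull (3*m)) (Fset m), ∀ v, psiFun m z v ≠ 0 → v ∈ s := by
  refine ⟨Finset.univ.image (chooseF m z), ⟨?_, ?_⟩, ?_⟩
  · intro v hv
    simp only [Finset.coe_image, Set.mem_image] at hv
    obtain ⟨i, _, rfl⟩ := hv
    exact chooseF_mem m hm z i
  · intro u hu w hw
    obtain ⟨i, _, rfl⟩ := Finset.mem_image.1 hu
    obtain ⟨j, _, rfl⟩ := Finset.mem_image.1 hw
    exact chooseF_no_adj m hm z i j
  · intro v hv
    obtain ⟨i, hi | hi⟩ := psi_support m hm z v hv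
    · refine Finset.mem_image.2 ⟨i, Finset.mem_univ _, ?_⟩
      rw [chooseF, if_pos hi.2.le, hi.1]
    · refine Finset.mem_image.2 ⟨i, Finset.mem_univ _, ?_⟩
      rw [chooseF, if_neg (not_le.2 hi.2), hi.1]

lemma psi_nonneg (z : EuclideanSpace ℝ (Fin (2*m-1+1))) (v : GV) : 0 ≤ psiFun m z v := by
  apply Finset.sum_nonneg
  intro i _
  split_ifs
  · exact le_max_right _ _
  · exact le_max_right _ _
  · exact le_rfl

lemma psi_sum (hm : 1 ≤ m) (z : EuclideanSpace ℝ (Fin (2*m-1+1)))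
    (hz : ∑ i, |z i| = 1) : ∑ᶠ v, psiFun m z v = 1 := by
  have hsupp : Function.support (psiFun m z) ⊆ ↑(TT m) := by
    intro v hv
    obtain ⟨i, hi | hi⟩ := psi_support m hm z v hv
    · exact Finset.mem_union_left _ (Finset.mem_image.2 ⟨i, Finset.mem_univ _, hi.1.symm⟩)
    · exact Finset.mem_union_right _ (Finset.mem_image.2 ⟨i, Finset.mem_univ _, hi.1.symm⟩)
  rw [finsum_eq_finset_sum_of_support_subset _ hsupp]
  unfold psiFun
  rw [Finset.sum_comm]
  have hterm : ∀ i : Fin (2*m-1+1), ∀ v ∈ TT m,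
      (if v = pv m ↑i then max (z i) 0 else if v = qv m ↑i then max (-(z i)) 0 else 0) =
      (if v = pv m ↑i then max (z i) 0 else 0) + (if v = qv m ↑i then max (-(z i)) 0 else 0) := by
    intro i v _
    by_cases h1 : v = pv m ↑i
    · rw [if_pos h1, if_pos h1, if_neg, add_zero]
      rw [h1]
      exact pv_ne_qv m hm ↑i ↑i (fin_lt m hm i) (fin_lt m hm i)
    · rw [if_neg h1, if_neg h1, zero_add]
  calc ∑ i : Fin (2*m-1+1), ∑ v ∈ TT m,
        (if v = pv m ↑i then max (z i) 0 else if v = qv m ↑i then max (-(z i)) 0 else 0)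
      = ∑ i : Fin (2*m-1+1), ((if pv m ↑i ∈ TT m then max (z i) 0 else 0)
          + (if qv m ↑i ∈ TT m then max (-(z i)) 0 else 0)) := by
        refine Finset.sum_congr rfl fun i _ => ?_
        rw [Finset.sum_congr rfl (hterm i), Finset.sum_add_distrib,
          Finset.sum_ite_eq' (TT m) (pv m ↑i), Finset.sum_ite_eq' (TT m) (qv m ↑i)]
    _ = ∑ i : Fin (2*m-1+1), |z i| := by
        refine Finset.sum_congr rfl fun i _ => ?_
        rw [if_pos, if_pos, max_add_abs]
        · exact Finset.mem_union_right _ (Finset.mem_image.2 ⟨i, Finset.mem_univ _, rfl⟩)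
        · exact Finset.mem_union_left _ (Finset.mem_image.2 ⟨i, Finset.mem_univ _, rfl⟩)
    _ = 1 := hz

end FinalHomeo
/-- The homeomorphism between the realization of the matching complex and the
`ℓ¹` sphere. -/
noncomputable def matchHomeo (m : ℕ) (hm : 1 ≤ m) :
    geom (cx (gFull (3*m)) (Fset m)) ≃ₜ L1S (2*m-1) where
  toFun f := ⟨WithLp.toLp 2 fun i : Fin (2*m-1+1) => f.1 (pv m ↑i) - f.1 (qv m ↑i), phi_sum m hm f⟩
  invFun z := ⟨psiFun m z.1, psi_mem m hm z.1, psi_nonneg m z.1, psi_sum m hm z.1 z.2⟩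
  left_inv f := by
    apply Subtype.ext
    funext v
    show psiFun m (WithLp.toLp 2 fun i : Fin (2*m-1+1) => f.1 (pv m ↑i) - f.1 (qv m ↑i)) v = f.1 v
    by_cases hv : v ∈ Fset m
    · obtain ⟨i, hi, h | h⟩ := cover m hm v hv
      · have hvi : v = pv m ↑(⟨i, by omega⟩ : Fin (2*m-1+1)) := h
        rw [hvi, psi_pv m hm]
        show max (f.1 (pv m i) - f.1 (qv m i)) 0 = f.1 (pv m i)
        rcases f_pair_zero m hm f i hi with h0 | h0
        · rw [h0, zero_sub, max_eq_right (neg_nonpos.2 (geom_F_nonneg m _))]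
        · rw [h0, sub_zero, max_eq_left (geom_F_nonneg m _)]
      · have hvi : v = qv m ↑(⟨i, by omega⟩ : Fin (2*m-1+1)) := h
        rw [hvi, psi_qv m hm]
        show max (-(f.1 (pv m i) - f.1 (qv m i))) 0 = f.1 (qv m i)
        rw [neg_sub]
        rcases f_pair_zero m hm f i hi with h0 | h0
        · rw [h0, sub_zero, max_eq_left (geom_F_nonneg m _)]
        · rw [h0, zero_sub, max_eq_right (neg_nonpos.2 (geom_F_nonneg m _))]
    · rw [geom_cx_eq_zero _ _ hv]
      apply Finset.sum_eq_zero
      intro i _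
      rw [if_neg, if_neg]
      · intro h
        exact hv (h ▸ qv_mem m hm ↑i (fin_lt m hm i))
      · intro h
        exact hv (h ▸ pv_mem m hm ↑i (fin_lt m hm i))
  right_inv z := by
    apply Subtype.ext
    refine (WithLp.ext_iff 2).2 (funext fun i => ?_)
    show psiFun m z.1 (pv m ↑i) - psiFun m z.1 (qv m ↑i) = z.1 i
    rw [psi_pv m hm, psi_qv m hm, max_sub_self]
  continuous_toFun := by
    apply Continuous.subtype_mk
    apply (PiLp.continuous_toLp 2 _).comp
    apply continuous_pi
    intro i
    exact ((continuous_apply (pv m ↑i)).comp continuous_subtype_val).sub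
      ((continuous_apply (qv m ↑i)).comp continuous_subtype_val)
  continuous_invFun := by
    apply Continuous.subtype_mk
    apply continuous_pi
    intro v
    unfold psiFun
    apply continuous_finset_sum
    intro i _
    by_cases h1 : v = pv m ↑i
    · simp only [if_pos h1]
      exact ((continuous_apply i).comp ((PiLp.continuous_ofLp 2 _).comp continuous_subtype_val)).max continuous_const
    · simp only [if_neg h1]
      by_cases h2 : v = qv m ↑i
      · simp only [if_pos h2]
        exact (((continuous_apply i).comp ((PiLp.continuous_ofLp 2 _).comp continuous_subtype_val)).neg).max continuous_const
      · simp only [if_neg h2]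
        exact continuous_const
/-- For `m ≥ 1` and `n = 3m`, there is a homotopy equivalence
`I(H_{n,1}) ≃ S^{2m-1}`. -/
theorem stmt_19 (m : ℕ) (hm : 0 < m) :
    Nonempty (ContinuousMap.HomotopyEquiv (geom (indepCx (lineH (3*m) 1)))
      (Sph (2*m-1))) := by
  obtain ⟨e1⟩ := chainEquiv m hm
  exact ⟨e1.trans ((matchHomeo m hm).toHomotopyEquiv.trans
    (l1Homeo (2*m-1)).toHomotopyEquiv)⟩
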